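/- Let q be a prime power, let s_1, s_2 ≥ 1 with k = s_1 + s_2, and let n_1, n_2 be integers with n_1 + n_2 = n and n_i ≥ s_i. Let G ∈ F_q^{k×n} be the block-diagonal matrix G = diag(G_1, G_2), where G_i ∈ F_q^{s_i×n_i} has the property that every s_i of its columns are linearly independent (an [n_i, s_i] MDS code). Then for each i ∈ {1,2}, E_i(G) = n·Σ_{j=1}^{s_i} 1/(n_i − j + 1) = n·(H_{n_i} − H_{n_i − s_i}). -/

import Mathlib

open Finset

/-- The `r`-th harmonic number `H_r = ∑_{i=1}^r 1/i`, as a real number (`H_0 = 0`). -/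
noncomputable def harm (r : ℕ) : ℝ := ∑ i ∈ Finset.range r, (1 : ℝ) / (i + 1)

/-- The span of the columns of `G` indexed by the subset `S ⊆ {1,…,n}`. -/
noncomputable def colSpan (F : Type*) [Field F] {k n : ℕ}
    (G : Matrix (Fin k) (Fin n) F) (S : Finset (Fin n)) : Submodule F (Fin k → F) :=
  Submodule.span F ((fun j => fun i => G i j) '' (S : Set (Fin n)))

/-- `α_V(s)`: the number of `s`-element subsets `S ⊆ {1,…,n}` whose columns span a
subspace containing the target subspace `V`. -/
noncomputable def alphaCount (F : Type*) [Field F] {k n : ℕ}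
    (G : Matrix (Fin k) (Fin n) F) (V : Submodule F (Fin k → F)) (s : ℕ) : ℕ :=
  Nat.card {S : Finset (Fin n) // S.card = s ∧ V ≤ colSpan F G S}

/-- The first file subspace `F₁ = span(e_1, …, e_{s₁}) ⊆ F_q^k`. -/
noncomputable def file1 (F : Type*) [Field F] (k s1 : ℕ) : Submodule F (Fin k → F) :=
  Submodule.span F {v : Fin k → F | ∃ i : Fin k, (i : ℕ) < s1 ∧ v = Pi.single i 1}

/-- The second file subspace `F₂ = span(e_{s₁+1}, …, e_k) ⊆ F_q^k`. -/
noncomputable def file2 (F : Type*) [Field F] (k s1 : ℕ) : Submodule F (Fin k → F) :=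
  Submodule.span F {v : Fin k → F | ∃ i : Fin k, s1 ≤ (i : ℕ) ∧ v = Pi.single i 1}

/-- The expected retrieval time `E(G, V) = n·H_n − ∑_{s=1}^{n−1} α_V(s)/C(n−1,s)`. -/
noncomputable def Etime (F : Type*) [Field F] {k n : ℕ}
    (G : Matrix (Fin k) (Fin n) F) (V : Submodule F (Fin k → F)) : ℝ :=
  (n : ℝ) * harm n -
    ∑ s ∈ Finset.Icc 1 (n - 1), (alphaCount F G V s : ℝ) / ((n - 1).choose s : ℝ)

lemma natid1 (n k : ℕ) : (n + 1).choose k * (n + 1 - k) = (n + 1) * n.choose k := by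
  rw [← Nat.choose_succ_right_eq, ← Nat.add_one_mul_choose_eq]

lemma choose_ne (n k : ℕ) (h : k ≤ n) : ((n.choose k : ℕ) : ℝ) ≠ 0 :=
  Nat.cast_ne_zero.mpr (Nat.choose_pos h).ne'

lemma natid1R (m t : ℕ) (ht : t ≤ m + 1) :
    ((m + 1).choose t : ℝ) * ((m : ℝ) + 1 - t) = ((m : ℝ) + 1) * (m.choose t : ℝ) := by
  have hc : ((m + 1 - t : ℕ) : ℝ) = (m : ℝ) + 1 - t := by
    rw [Nat.cast_sub ht]; push_cast; ring
  calc ((m + 1).choose t : ℝ) * ((m : ℝ) + 1 - t)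
      = (((m + 1).choose t * (m + 1 - t) : ℕ) : ℝ) := by rw [Nat.cast_mul, hc]
    _ = (((m + 1) * m.choose t : ℕ) : ℝ) := by rw [natid1]
    _ = ((m : ℝ) + 1) * (m.choose t : ℝ) := by push_cast; ring

lemma natid2R (m t : ℕ) :
    ((m : ℝ) + 1) * (m.choose t : ℝ) = ((m + 1).choose (t + 1) : ℝ) * ((t : ℝ) + 1) := by
  have h := Nat.add_one_mul_choose_eq m t
  have : ((Nat.succ m * m.choose t : ℕ) : ℝ) = (((m + 1).choose (t + 1) * (t + 1) : ℕ) : ℝ) := by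
    exact_mod_cast congrArg (Nat.cast (R := ℝ)) h
  push_cast at this
  linarith [this]

lemma L2 (n2 : ℕ) : ∀ m t : ℕ, t ≤ m →
    ∑ u ∈ range (n2 + 1),
      ((m + 1).choose t * n2.choose u : ℝ) / ((m + n2).choose (t + u) : ℝ)
      = ((m : ℝ) + 1 + n2) / ((m : ℝ) + 1 - t) := by
  induction n2 with
  | zero =>
    intro m t ht
    have hmt : ((m.choose t : ℕ) : ℝ) ≠ 0 := choose_ne m t ht
    have h2 : (m : ℝ) + 1 - t ≠ 0 := by
      have : (t : ℝ) ≤ m := by exact_mod_cast ht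
      nlinarith
    rw [Finset.sum_range_one]
    simp only [Nat.choose_zero_right, Nat.cast_one, mul_one, Nat.add_zero, Nat.cast_zero, add_zero]
    rw [div_eq_div_iff hmt h2]
    have := natid1R m t (le_trans ht (Nat.le_succ m))
    push_cast
    nlinarith [this]
  | succ n2 ih =>
    intro m t ht
    have hm2 : ((m : ℝ) + 2) ≠ 0 := by positivity
    have h1t : (m : ℝ) + 1 - t ≠ 0 := by
      have : (t : ℝ) ≤ m := by exact_mod_cast ht; 
      nlinarith
    have h2t : (m : ℝ) + 2 - t ≠ 0 := by
      have : (t : ℝ) ≤ m := by exact_mod_cast ht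
      nlinarith
    have split : ∀ u ∈ range (n2 + 2),
        ((m + 1).choose t * (n2 + 1).choose u : ℝ) / ((m + (n2 + 1)).choose (t + u) : ℝ)
        = ((m + 1).choose t * n2.choose u : ℝ) / ((m + 1 + n2).choose (t + u) : ℝ)
          + (if u = 0 then 0 else ((m + 1).choose t * n2.choose (u - 1) : ℝ)
              / ((m + 1 + n2).choose (t + u) : ℝ)) := by
      intro u _
      have harr : m + (n2 + 1) = m + 1 + n2 := by ring
      cases u with
      | zero => rw [harr]; simp
      | succ v =>
        simp only [Nat.succ_ne_zero, if_neg, Nat.add_sub_cancel]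
        rw [harr, Nat.choose_succ_succ n2 v]
        push_cast
        ring
    rw [Finset.sum_congr rfl split, Finset.sum_add_distrib]
    -- scale facts
    have hscale1 : ((m + 1).choose t : ℝ)
        = (((m : ℝ) + 2 - t) / ((m : ℝ) + 2)) * ((m + 2).choose t : ℝ) := by
      have := natid1R (m + 1) t (by omega)
      push_cast at this ⊢
      field_simp
      nlinarith [this]
    have hscale2 : ((m + 1).choose t : ℝ)
        = (((t : ℝ) + 1) / ((m : ℝ) + 2)) * ((m + 2).choose (t + 1) : ℝ) := by
      have := natid2R (m + 1) t
      push_cast at this ⊢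
      field_simp
      nlinarith [this]
    -- X
    have hX : ∑ u ∈ range (n2 + 2),
        ((m + 1).choose t * n2.choose u : ℝ) / ((m + 1 + n2).choose (t + u) : ℝ)
        = ((m : ℝ) + 2 + n2) / ((m : ℝ) + 2) := by
      rw [Finset.sum_range_succ, Nat.choose_succ_self]
      have congr1 : ∀ u ∈ range (n2 + 1),
          ((m + 1).choose t * n2.choose u : ℝ) / ((m + 1 + n2).choose (t + u) : ℝ)
          = (((m : ℝ) + 2 - t) / ((m : ℝ) + 2)) *
            (((m + 1 + 1).choose t * n2.choose u : ℝ) / ((m + 1 + n2).choose (t + u) : ℝ)) := by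
        intro u _
        rw [hscale1]
        push_cast
        ring
      rw [Finset.sum_congr rfl congr1, ← Finset.mul_sum, ih (m + 1) t (by omega)]
      have hc : ((m : ℝ) + 1 + 1 - t) = (m : ℝ) + 2 - t := by push_cast; ring
      push_cast
      rw [hc, mul_zero, zero_div, add_zero]
      rw [div_mul_div_comm, div_eq_div_iff (by exact mul_ne_zero hm2 h2t) hm2]
      ring
    -- Y
    have hY : ∑ u ∈ range (n2 + 2),
        (if u = 0 then (0 : ℝ) else ((m + 1).choose t * n2.choose (u - 1) : ℝ)
          / ((m + 1 + n2).choose (t + u) : ℝ))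
        = (((t : ℝ) + 1) * ((m : ℝ) + 2 + n2)) / (((m : ℝ) + 2) * ((m : ℝ) + 1 - t)) := by
      rw [Finset.sum_range_succ']
      simp only [Nat.succ_ne_zero, if_false, Nat.add_sub_cancel, if_pos, add_zero, ite_false]
      have congr2 : ∀ u ∈ range (n2 + 1),
          ((m + 1).choose t * n2.choose u : ℝ) / ((m + 1 + n2).choose (t + (u + 1)) : ℝ)
          = (((t : ℝ) + 1) / ((m : ℝ) + 2)) *
            (((m + 1 + 1).choose (t + 1) * n2.choose u : ℝ)
              / ((m + 1 + n2).choose ((t + 1) + u) : ℝ)) := by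
        intro u _
        have : t + (u + 1) = (t + 1) + u := by ring
        rw [this, hscale2]
        push_cast
        ring
      rw [Finset.sum_congr rfl congr2, ← Finset.mul_sum, ih (m + 1) (t + 1) (by omega)]
      have hc : ((m : ℝ) + 1 + 1 - (((t : ℝ)) + 1)) = (m : ℝ) + 1 - t := by ring
      push_cast
      rw [hc]
      rw [div_mul_div_comm, div_eq_div_iff (by exact mul_ne_zero hm2 h1t) (by exact mul_ne_zero hm2 h1t)]
      ring
    rw [hX, hY]
    push_cast
    rw [div_add_div _ _ hm2 (by exact mul_ne_zero hm2 h1t), div_eq_div_iff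
      (by exact mul_ne_zero hm2 (mul_ne_zero hm2 h1t)) h1t]
    ring


-- L1
lemma L1 (m : ℕ) :
    ∑ s ∈ range (m + 1), ((m + 1).choose s : ℝ) / (m.choose s : ℝ)
      = ((m : ℝ) + 1) * harm (m + 1) := by
  have step : ∀ s ∈ range (m + 1),
      ((m + 1).choose s : ℝ) / (m.choose s : ℝ) = ((m : ℝ) + 1) / ((m : ℝ) + 1 - s) := by
    intro s hs
    rw [mem_range] at hs
    have hsm : s ≤ m := by omega
    have h1 : (m : ℝ) + 1 - s ≠ 0 := by
      have : (s : ℝ) ≤ m := by exact_mod_cast hsm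
      nlinarith
    rw [div_eq_div_iff (choose_ne m s hsm) h1]
    have := natid1R m s (by omega)
    linarith [this]
  rw [Finset.sum_congr rfl step]
  rw [← Finset.sum_range_reflect]
  unfold harm
  rw [Finset.mul_sum]
  apply Finset.sum_congr rfl
  intro j hj
  rw [mem_range] at hj
  have hjm : j ≤ m := by omega
  have hcast : ((m + 1 - 1 - j : ℕ) : ℝ) = (m : ℝ) - j := by
    have : m + 1 - 1 - j = m - j := by omega
    rw [this, Nat.cast_sub hjm]
  rw [hcast]
  have : (m : ℝ) + 1 - ((m : ℝ) - j) = (j : ℝ) + 1 := by ring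
  rw [this]
  ring

-- harm difference
lemma harm_diff (n1 : ℕ) : ∀ s ≤ n1,
    ∑ t ∈ range s, (1 : ℝ) / ((n1 : ℝ) - t) = harm n1 - harm (n1 - s) := by
  intro s
  induction s with
  | zero => intro _; simp [harm]
  | succ s ih =>
    intro hs
    rw [Finset.sum_range_succ, ih (by omega)]
    have h1 : n1 - s = (n1 - (s + 1)) + 1 := by omega
    have h2 : harm (n1 - s) = harm (n1 - (s + 1)) + 1 / ((n1 : ℝ) - s) := by
      rw [h1]
      unfold harm
      rw [Finset.sum_range_succ]
      congr 1
      have : ((n1 - (s + 1) : ℕ) : ℝ) = (n1 : ℝ) - s - 1 := by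
        rw [Nat.cast_sub hs]; push_cast; ring
      rw [this]; ring_nf
    rw [h2]; ring

lemma harm_sum_Icc (n1 s1 : ℕ) (h : s1 ≤ n1) :
    ∑ j ∈ Finset.Icc 1 s1, (1 : ℝ) / ((n1 : ℝ) - (j : ℝ) + 1)
      = ∑ t ∈ range s1, (1 : ℝ) / ((n1 : ℝ) - t) := by
  have : Finset.Icc 1 s1 = Finset.Ico 1 (s1 + 1) := by rw [Finset.Ico_add_one_right_eq_Icc]
  rw [this, Finset.sum_Ico_eq_sum_range]
  apply Finset.sum_congr rfl
  intro t _
  push_cast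
  congr 1
  ring

lemma countLemma (n0 n1 n2 m s : ℕ) (E : Fin n0 ≃ (Fin n1 ⊕ Fin n2)) :
    Nat.card {S : Finset (Fin n0) // S.card = s ∧ m ≤ ((S.map E.toEmbedding).toLeft).card}
      = ∑ t ∈ range (s + 1), if m ≤ t then n1.choose t * n2.choose (s - t) else 0 := by
  rw [Nat.card_eq_fintype_card, Fintype.card_subtype]
  -- transport to Finset (Fin n1 ⊕ Fin n2)
  have hbij : (Finset.univ.filter (fun S : Finset (Fin n0) =>
      S.card = s ∧ m ≤ ((S.map E.toEmbedding).toLeft).card)).card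
      = (Finset.univ.filter (fun U : Finset (Fin n1 ⊕ Fin n2) =>
      U.card = s ∧ m ≤ U.toLeft.card)).card := by
    apply Finset.card_bij (fun S _ => S.map E.toEmbedding)
    · intro S hS
      simp only [mem_filter, mem_univ, true_and] at hS ⊢
      rwa [Finset.card_map]
    · intro S _ T _ h
      exact Finset.map_injective E.toEmbedding h
    · intro U hU
      refine ⟨U.map E.symm.toEmbedding, ?_, ?_⟩
      · simp only [mem_filter, mem_univ, true_and] at hU ⊢
        rw [Finset.map_map]
        have : (E.symm.toEmbedding.trans E.toEmbedding) = Function.Embedding.refl _ := by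
          ext x; simp
        rw [this, Finset.map_refl, Finset.card_map]
        exact hU
      · rw [Finset.map_map]
        have : (E.symm.toEmbedding.trans E.toEmbedding) = Function.Embedding.refl _ := by
          ext x; simp
        rw [this, Finset.map_refl]
  rw [hbij]
  -- fiber by toLeft card
  rw [Finset.card_eq_sum_card_fiberwise (f := fun U => U.toLeft.card)
    (t := range (s + 1)) (fun U hU => by
      simp only [Finset.mem_coe, mem_filter, mem_univ, true_and] at hU
      rw [Finset.mem_coe, mem_range]
      exact Nat.lt_succ_of_le (hU.1 ▸ Finset.card_toLeft_le))]
  apply Finset.sum_congr rfl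
  intro t ht
  rw [mem_range] at ht
  rw [Finset.filter_filter]
  by_cases hm : m ≤ t
  · rw [if_pos hm]
    -- count U with card = s, toLeft.card = t
    have : (Finset.univ.filter (fun U : Finset (Fin n1 ⊕ Fin n2) =>
        (U.card = s ∧ m ≤ U.toLeft.card) ∧ U.toLeft.card = t)).card
        = ((Finset.univ.powersetCard t ×ˢ Finset.univ.powersetCard (s - t) :
            Finset (Finset (Fin n1) × Finset (Fin n2)))).card := by
      apply Finset.card_bij (fun U _ => (U.toLeft, U.toRight))
      · intro U hU
        simp only [mem_filter, mem_univ, true_and] at hU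
        obtain ⟨⟨hcard, _⟩, hL⟩ := hU
        have hsum := Finset.card_toLeft_add_card_toRight (u := U)
        rw [Finset.mem_product, Finset.mem_powersetCard_univ, Finset.mem_powersetCard_univ]
        dsimp only
        constructor
        · exact hL
        · omega
      · intro U _ V _ h
        have h1 : U.toLeft = V.toLeft := congrArg Prod.fst h
        have h2 : U.toRight = V.toRight := congrArg Prod.snd h
        rw [← Finset.toLeft_disjSum_toRight (u := U), ← Finset.toLeft_disjSum_toRight (u := V),
          h1, h2]
      · intro p hp
        rw [Finset.mem_product, Finset.mem_powersetCard_univ, Finset.mem_powersetCard_univ] at hp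
        obtain ⟨hp1, hp2⟩ := hp
        refine ⟨p.1.disjSum p.2, ?_, ?_⟩
        · simp only [mem_filter, mem_univ, true_and, Finset.toLeft_disjSum,
            Finset.card_disjSum]
          omega
        · simp [Finset.toLeft_disjSum, Finset.toRight_disjSum]
    rw [this, Finset.card_product, Finset.card_powersetCard, Finset.card_powersetCard,
      Finset.card_univ, Finset.card_univ, Fintype.card_fin, Fintype.card_fin]
  · rw [if_neg hm]
    rw [Finset.card_eq_zero, Finset.filter_eq_empty_iff]
    intro U _
    rintro ⟨⟨_, hmle⟩, hL⟩
    omega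

lemma spanLemma (F : Type*) [Field F] {k n s1 n1 s2 n2 : ℕ} (hs1 : 1 ≤ s1)
    (R : Fin k ≃ (Fin s1 ⊕ Fin s2)) (Ec : Fin n ≃ (Fin n1 ⊕ Fin n2))
    (G1 : Matrix (Fin s1) (Fin n1) F) (G2 : Matrix (Fin s2) (Fin n2) F)
    (hG1 : ∀ T : Finset (Fin n1), T.card = s1 →
      LinearIndependent F (fun j : {x : Fin n1 // x ∈ T} => fun i => G1 i j.1))
    (G : Matrix (Fin k) (Fin n) F)
    (hG : ∀ i j, G i j = Matrix.fromBlocks G1 0 0 G2 (R i) (Ec j))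
    (S : Finset (Fin n)) :
    (Submodule.span F {v : Fin k → F | ∃ a : Fin s1, v = Pi.single (R.symm (Sum.inl a)) 1}
        ≤ colSpan F G S)
      ↔ s1 ≤ ((S.map Ec.toEmbedding).toLeft).card := by
  classical
  set A := (S.map Ec.toEmbedding).toLeft with hA
  constructor
  · intro h
    by_contra hlt
    push_neg at hlt
    set π : (Fin k → F) →ₗ[F] (Fin s1 → F) :=
      LinearMap.funLeft F F (fun a => R.symm (Sum.inl a)) with hπ
    have hπapp : ∀ (v : Fin k → F) (b : Fin s1), π v b = v (R.symm (Sum.inl b)) :=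
      fun v b => by rw [hπ]; rfl
    set B : Finset (Fin s1 → F) := A.image (fun j1 => fun a => G1 a j1) with hB
    have hπcol : ∀ j ∈ S, π (fun i => G i j) ∈ Submodule.span F (B : Set (Fin s1 → F)) := by
      intro j hj
      cases hEj : Ec j with
      | inl j1 =>
        have heq : π (fun i => G i j) = fun a => G1 a j1 := by
          funext a
          rw [hπapp, hG, Equiv.apply_symm_apply, hEj]
          rfl
        rw [heq]
        apply Submodule.subset_span
        rw [hB, Finset.coe_image]
        refine ⟨j1, ?_, rfl⟩
        rw [hA, Finset.mem_coe, Finset.mem_toLeft, Finset.mem_map]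
        exact ⟨j, hj, by rw [hEj.symm]; rfl⟩
      | inr j2 =>
        have heq : π (fun i => G i j) = 0 := by
          funext a
          rw [hπapp, hG, Equiv.apply_symm_apply, hEj]
          rfl
        rw [heq]
        exact Submodule.zero_mem _
    have hmaple : Submodule.map π (colSpan F G S) ≤ Submodule.span F (B : Set (Fin s1 → F)) := by
      rw [colSpan, Submodule.map_span, Submodule.span_le]
      rintro x ⟨v, ⟨j, hjS, rfl⟩, rfl⟩
      exact hπcol j hjS
    have htop : ∀ a : Fin s1, Pi.single a (1 : F) ∈ Submodule.span F (B : Set (Fin s1 → F)) := by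
      intro a
      have hmem : Pi.single (R.symm (Sum.inl a)) (1 : F) ∈ colSpan F G S := by
        apply h
        apply Submodule.subset_span
        exact ⟨a, rfl⟩
      have heq : π (Pi.single (R.symm (Sum.inl a)) (1 : F)) = Pi.single a 1 := by
        funext b
        rw [hπapp, Pi.single_apply, Pi.single_apply]
        congr 1
        simp only [eq_iff_iff]
        constructor
        · intro hh
          have := R.symm.injective hh
          exact Sum.inl.injEq _ _ ▸ (by injection this)
        · rintro rfl; rfl
      exact heq ▸ hmaple ⟨_, hmem, rfl⟩
    have hspan_top : Submodule.span F (B : Set (Fin s1 → F)) = ⊤ := by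
      rw [eq_top_iff]
      rw [← (Pi.basisFun F (Fin s1)).span_eq, Submodule.span_le]
      rintro v ⟨a, rfl⟩
      have : Pi.basisFun F (Fin s1) a = Pi.single a 1 := by
        simp [Pi.basisFun_apply]
      rw [this]
      exact htop a
    have hfr : (B : Set (Fin s1 → F)).finrank F ≤ B.card := finrank_span_finset_le_card B
    have hcard : Module.finrank F (Fin s1 → F) ≤ B.card := by
      rw [Set.finrank, hspan_top, finrank_top] at hfr
      exact hfr
    rw [Module.finrank_fin_fun] at hcard
    have hBA : B.card ≤ A.card := by rw [hB]; exact Finset.card_image_le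
    omega
  · intro hAcard
    obtain ⟨T, hTA, hTcard⟩ := Finset.exists_subset_card_eq hAcard
    have hind := hG1 T hTcard
    have hne : Nonempty {x : Fin n1 // x ∈ T} := by
      have : T.Nonempty := Finset.card_pos.mp (by omega)
      exact ⟨⟨this.choose, this.choose_spec⟩⟩
    have hspan : Submodule.span F (Set.range (fun j : {x : Fin n1 // x ∈ T} =>
        fun i => G1 i j.1)) = ⊤ := by
      apply hind.span_eq_top_of_card_eq_finrank
      rw [Fintype.card_coe, hTcard, Module.finrank_fin_fun]
    -- lifting map
    set Φ : (Fin s1 → F) →ₗ[F] (Fin k → F) :=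
      { toFun := fun v i => Sum.elim v (fun _ => (0 : F)) (R i),
        map_add' := by intro v w; funext i; cases hRi : R i <;> simp [hRi]
        map_smul' := by intro c v; funext i; cases hRi : R i <;> simp [hRi] } with hΦ
    have hΦapp : ∀ (v : Fin s1 → F) (i : Fin k),
        Φ v i = Sum.elim v (fun _ => (0 : F)) (R i) := fun v i => by rw [hΦ]; rfl
    have hΦcols : ∀ j1 : {x : Fin n1 // x ∈ T}, Φ (fun i => G1 i j1.1) ∈ colSpan F G S := by
      intro j1
      have hj1A : j1.1 ∈ A := hTA j1.2
      rw [hA, Finset.mem_toLeft, Finset.mem_map] at hj1A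
      obtain ⟨x, hxS, hEx⟩ := hj1A
      apply Submodule.subset_span
      refine ⟨x, hxS, ?_⟩
      funext i
      show G i x = Sum.elim (fun a => G1 a j1.1) (fun _ => (0 : F)) (R i)
      rw [hG]
      have : Ec x = Sum.inl j1.1 := hEx
      rw [this]
      cases hRi : R i <;> rfl
    rw [Submodule.span_le]
    rintro v ⟨a, rfl⟩
    have h1 : Pi.single a (1 : F) ∈ Submodule.span F (Set.range (fun j : {x : Fin n1 // x ∈ T} =>
        fun i => G1 i j.1)) := by rw [hspan]; trivial
    have h2 : Φ (Pi.single a (1 : F)) ∈ colSpan F G S := by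
      have := Submodule.mem_map_of_mem (f := Φ) h1
      rw [Submodule.map_span] at this
      refine Submodule.span_le.mpr ?_ this
      rintro x ⟨w, ⟨j1, rfl⟩, rfl⟩
      exact hΦcols j1
    have heq : Pi.single (R.symm (Sum.inl a)) (1 : F) = Φ (Pi.single a 1) := by
      funext i
      rw [hΦapp]
      cases hRi : R i with
      | inl b =>
        simp only [Sum.elim_inl, Pi.single_apply]
        congr 1
        simp only [eq_iff_iff]
        constructor
        · intro hh
          subst hh
          rw [Equiv.apply_symm_apply] at hRi
          injection hRi with hab
          exact hab.symm
        · rintro rfl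
          rw [← hRi, Equiv.symm_apply_apply]
      | inr b =>
        simp only [Sum.elim_inr, Pi.single_apply]
        rw [if_neg]
        intro hh
        subst hh
        rw [Equiv.apply_symm_apply] at hRi
        exact Sum.inl_ne_inr hRi
    rw [heq]
    exact h2

lemma master (F : Type*) [Field F] {k n s1 n1 s2 n2 : ℕ}
    (hs1 : 1 ≤ s1) (hn1 : s1 ≤ n1) (hn : n = n1 + n2)
    (R : Fin k ≃ (Fin s1 ⊕ Fin s2)) (Ec : Fin n ≃ (Fin n1 ⊕ Fin n2))
    (G1 : Matrix (Fin s1) (Fin n1) F) (G2 : Matrix (Fin s2) (Fin n2) F)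
    (hG1 : ∀ T : Finset (Fin n1), T.card = s1 →
      LinearIndependent F (fun j : {x : Fin n1 // x ∈ T} => fun i => G1 i j.1))
    (G : Matrix (Fin k) (Fin n) F)
    (hG : ∀ i j, G i j = Matrix.fromBlocks G1 0 0 G2 (R i) (Ec j)) :
    Etime F G (Submodule.span F
        {v : Fin k → F | ∃ a : Fin s1, v = Pi.single (R.symm (Sum.inl a)) 1})
      = (n : ℝ) * ∑ t ∈ range s1, (1 : ℝ) / ((n1 : ℝ) - t) := by
  set V := Submodule.span F
    {v : Fin k → F | ∃ a : Fin s1, v = Pi.single (R.symm (Sum.inl a)) 1} with hV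
  have halpha : ∀ s, alphaCount F G V s
      = ∑ t ∈ range (s + 1), if s1 ≤ t then n1.choose t * n2.choose (s - t) else 0 := by
    intro s
    rw [← countLemma n n1 n2 s1 s Ec, alphaCount]
    apply Nat.card_congr
    apply Equiv.subtypeEquivRight
    intro S
    exact and_congr_right fun _ => spanLemma F hs1 R Ec G1 G2 hG1 G hG S
  obtain ⟨m, rfl⟩ : ∃ m, n = m + 1 := ⟨n - 1, by omega⟩
  have hm : m + 1 = n1 + n2 := hn
  rw [Etime]
  have hmm : m + 1 - 1 = m := by omega
  rw [hmm]
  set f : ℕ → ℝ := fun s => (alphaCount F G V s : ℝ) / (m.choose s : ℝ) with hf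
  have ha0 : alphaCount F G V 0 = 0 := by
    rw [halpha 0, Finset.sum_range_one, if_neg (by omega)]
  have hf0 : f 0 = 0 := by
    simp only [hf, ha0, Nat.cast_zero, zero_div]
  have hIcc : ∑ s ∈ Finset.Icc 1 m, f s = ∑ s ∈ range (m + 1), f s := by
    rw [Finset.sum_range_succ']
    rw [hf0, add_zero]
    have : Finset.Icc 1 m = Finset.Ico 1 (m + 1) := by rw [Finset.Ico_add_one_right_eq_Icc]
    rw [this, Finset.sum_Ico_eq_sum_range]
    have h1 : m + 1 - 1 = m := by omega
    rw [h1]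
    exact Finset.sum_congr rfl fun i _ => by rw [add_comm]
  rw [hIcc]
  -- split f
  have hvander : ∀ s : ℕ, ((m + 1).choose s : ℝ)
      = ∑ t ∈ range (s + 1), (n1.choose t * n2.choose (s - t) : ℝ) := by
    intro s
    rw [hm, Nat.add_choose_eq]
    rw [Finset.Nat.sum_antidiagonal_eq_sum_range_succ_mk]
    push_cast
    rfl
  have hsplit : ∀ s ∈ range (m + 1), f s
      = ((m + 1).choose s : ℝ) / (m.choose s : ℝ)
        - ∑ t ∈ range (s + 1),
            (if t < s1 then (n1.choose t * n2.choose (s - t) : ℝ) else 0) / (m.choose s : ℝ) := by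
    intro s hs
    simp only [hf]
    have : (alphaCount F G V s : ℝ)
        = ∑ t ∈ range (s + 1), (if s1 ≤ t then (n1.choose t * n2.choose (s - t) : ℝ) else 0) := by
      rw [halpha s]
      push_cast
      apply Finset.sum_congr rfl
      intro t _
      split_ifs <;> simp
    rw [this, hvander s, ← Finset.sum_div, div_sub_div_same]
    congr 1
    rw [← Finset.sum_sub_distrib]
    apply Finset.sum_congr rfl
    intro t _
    split_ifs with h1 h2
    · omega
    · simp
    · simp
    · omega
  rw [Finset.sum_congr rfl hsplit, Finset.sum_sub_distrib, L1 m]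
  push_cast
  rw [sub_sub_cancel]
  -- now the double sum
  obtain ⟨p, rfl⟩ : ∃ p, n1 = p + 1 := ⟨n1 - 1, by omega⟩
  have hmp : m = p + n2 := by omega
  subst hmp
  set g : ℕ → ℕ → ℝ :=
    fun t s => ((p + 1).choose t : ℝ) * (n2.choose (s - t) : ℝ) / ((p + n2).choose s : ℝ)
    with hg
  have hinner : ∀ s ∈ range (p + n2 + 1),
      ∑ t ∈ range (s + 1), (if t < s1 then ((p + 1).choose t : ℝ) * (n2.choose (s - t) : ℝ)
          else 0) / ((p + n2).choose s : ℝ)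
      = ∑ t ∈ range (p + n2 + 1), if t ≤ s then (if t < s1 then g t s else 0) else 0 := by
    intro s hs
    rw [mem_range] at hs
    have hfilt : Finset.filter (fun t => t ≤ s) (range (p + n2 + 1)) = range (s + 1) := by
      ext a
      simp only [Finset.mem_filter, Finset.mem_range]
      omega
    rw [← Finset.sum_filter, hfilt]
    apply Finset.sum_congr rfl
    intro t _
    split_ifs with h1
    · rfl
    · exact zero_div _
  rw [Finset.sum_congr rfl hinner, Finset.sum_comm]
  have hstep : ∀ t ∈ range (p + n2 + 1),
      ∑ s ∈ range (p + n2 + 1), (if t ≤ s then (if t < s1 then g t s else 0) else 0)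
      = if t < s1 then ∑ s ∈ range (p + n2 + 1), (if t ≤ s then g t s else 0) else 0 := by
    intro t _
    by_cases h : t < s1
    · simp only [if_pos h]
    · simp only [if_neg h, ite_self, Finset.sum_const_zero]
  rw [Finset.sum_congr rfl hstep, ← Finset.sum_filter]
  have hfilt2 : Finset.filter (fun t => t < s1) (range (p + n2 + 1)) = range s1 := by
    ext a
    simp only [Finset.mem_filter, Finset.mem_range]
    omega
  rw [hfilt2]
  have hH : ∀ t ∈ range s1,
      ∑ s ∈ range (p + n2 + 1), (if t ≤ s then g t s else 0)
      = ((p : ℝ) + 1 + n2) / ((p : ℝ) + 1 - t) := by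
    intro t ht
    rw [mem_range] at ht
    have htp : t ≤ p := by omega
    have hfilt3 : Finset.filter (fun s => t ≤ s) (range (p + n2 + 1)) = Finset.Ico t (p + n2 + 1) := by
      ext a
      simp only [Finset.mem_filter, Finset.mem_range, Finset.mem_Ico]
      omega
    rw [← Finset.sum_filter, hfilt3, Finset.sum_Ico_eq_sum_range]
    have hsub : range (n2 + 1) ⊆ range (p + n2 + 1 - t) := by
      apply Finset.range_subset_range.mpr
      omega
    have hzero : ∀ u ∈ range (p + n2 + 1 - t), u ∉ range (n2 + 1) → g t (t + u) = 0 := by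
      intro u _ hu
      rw [Finset.mem_range] at hu
      simp only [hg]
      have : n2.choose (t + u - t) = 0 := by
        rw [Nat.add_sub_cancel_left]
        exact Nat.choose_eq_zero_of_lt (by omega)
      rw [this]
      simp
    rw [← Finset.sum_subset hsub hzero]
    have hterm : ∀ u ∈ range (n2 + 1), g t (t + u)
        = ((p + 1).choose t : ℝ) * (n2.choose u : ℝ) / ((p + n2).choose (t + u) : ℝ) := by
      intro u _
      simp only [hg]
      rw [Nat.add_sub_cancel_left]
    rw [Finset.sum_congr rfl hterm]
    have := L2 n2 p t htp
    convert this using 2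
  rw [Finset.sum_congr rfl hH]
  push_cast
  rw [Finset.mul_sum]
  apply Finset.sum_congr rfl
  intro t ht
  rw [mem_range] at ht
  rw [mul_one_div]
  congr 1
  ring


/-- Expected retrieval times of the file-dedicated MDS code
`G = diag(G₁, G₂)` with allocation `(n₁, n₂)`:
`E_i(G) = n·∑_{j=1}^{s_i} 1/(n_i − j + 1) = n·(H_{n_i} − H_{n_i − s_i})`. -/
theorem stmt14 (q s1 s2 n1 n2 k n : ℕ) (hq : IsPrimePow q)
    (F : Type*) [Field F] [Fintype F] (hF : Fintype.card F = q)
    (hs1 : 1 ≤ s1) (hs2 : 1 ≤ s2) (hk : k = s1 + s2) (hn : n = n1 + n2)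
    (hn1 : s1 ≤ n1) (hn2 : s2 ≤ n2)
    (G1 : Matrix (Fin s1) (Fin n1) F) (G2 : Matrix (Fin s2) (Fin n2) F)
    (hG1 : ∀ S : Finset (Fin n1), S.card = s1 →
      LinearIndependent F (fun j : {x : Fin n1 // x ∈ S} => fun i => G1 i j.1))
    (hG2 : ∀ S : Finset (Fin n2), S.card = s2 →
      LinearIndependent F (fun j : {x : Fin n2 // x ∈ S} => fun i => G2 i j.1))
    (G : Matrix (Fin k) (Fin n) F)
    (hG : G = (Matrix.fromBlocks G1 0 0 G2).submatrix
      (finSumFinEquiv.symm ∘ Fin.cast hk) (finSumFinEquiv.symm ∘ Fin.cast hn)) :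
    (Etime F G (file1 F k s1) =
        (n : ℝ) * ∑ j ∈ Finset.Icc 1 s1, (1 : ℝ) / ((n1 : ℝ) - (j : ℝ) + 1) ∧
      Etime F G (file1 F k s1) = (n : ℝ) * (harm n1 - harm (n1 - s1))) ∧
    (Etime F G (file2 F k s1) =
        (n : ℝ) * ∑ j ∈ Finset.Icc 1 s2, (1 : ℝ) / ((n2 : ℝ) - (j : ℝ) + 1) ∧
      Etime F G (file2 F k s1) = (n : ℝ) * (harm n2 - harm (n2 - s2))) := by
  set R : Fin k ≃ (Fin s1 ⊕ Fin s2) := (finCongr hk).trans finSumFinEquiv.symm with hR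
  set Ec : Fin n ≃ (Fin n1 ⊕ Fin n2) := (finCongr hn).trans finSumFinEquiv.symm with hEc
  have hGfun : ∀ i j, G i j = Matrix.fromBlocks G1 0 0 G2 (R i) (Ec j) := by
    intro i j
    rw [hG]
    rfl
  -- R computations
  have hRval : ∀ i : Fin k, (hi : (i : ℕ) < s1) → R i = Sum.inl ⟨(i : ℕ), hi⟩ := by
    intro i hi
    have h1 : Fin.cast hk i = Fin.castAdd s2 ⟨(i : ℕ), hi⟩ := Fin.ext rfl
    show finSumFinEquiv.symm ((finCongr hk) i) = Sum.inl ⟨(i : ℕ), hi⟩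
    rw [finCongr_apply, h1, finSumFinEquiv_symm_apply_castAdd]
  have hRval2 : ∀ i : Fin k, (hi : s1 ≤ (i : ℕ)) → R i = Sum.inr ⟨(i : ℕ) - s1, by omega⟩ := by
    intro i hi
    have h1 : Fin.cast hk i = Fin.natAdd s1 ⟨(i : ℕ) - s1, by omega⟩ := Fin.ext (by
      show (i : ℕ) = s1 + ((i : ℕ) - s1)
      omega)
    show finSumFinEquiv.symm ((finCongr hk) i) = Sum.inr _
    rw [finCongr_apply, h1, finSumFinEquiv_symm_apply_natAdd]
  have hRsymm_val : ∀ a : Fin s1, ((R.symm (Sum.inl a) : Fin k) : ℕ) = (a : ℕ) := by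
    intro a
    show ((Fin.cast hk.symm (finSumFinEquiv (Sum.inl a)) : Fin k) : ℕ) = (a : ℕ)
    rw [finSumFinEquiv_apply_left]
    rfl
  have hRsymm_val2 : ∀ b : Fin s2, ((R.symm (Sum.inr b) : Fin k) : ℕ) = s1 + (b : ℕ) := by
    intro b
    show ((Fin.cast hk.symm (finSumFinEquiv (Sum.inr b)) : Fin k) : ℕ) = s1 + (b : ℕ)
    rw [finSumFinEquiv_apply_right]
    rfl
  have hfile1 : file1 F k s1 = Submodule.span F
      {v : Fin k → F | ∃ a : Fin s1, v = Pi.single (R.symm (Sum.inl a)) 1} := by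
    rw [file1]
    congr 1
    ext v
    simp only [Set.mem_setOf_eq]
    constructor
    · rintro ⟨i, hi, rfl⟩
      refine ⟨⟨(i : ℕ), hi⟩, ?_⟩
      have : R.symm (Sum.inl ⟨(i : ℕ), hi⟩) = i := by
        rw [← hRval i hi, Equiv.symm_apply_apply]
      rw [this]
    · rintro ⟨a, rfl⟩
      refine ⟨R.symm (Sum.inl a), ?_, rfl⟩
      rw [hRsymm_val a]
      exact a.2
  have hfile2 : file2 F k s1 = Submodule.span F
      {v : Fin k → F | ∃ b : Fin s2, v = Pi.single (R.symm (Sum.inr b)) 1} := by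
    rw [file2]
    congr 1
    ext v
    simp only [Set.mem_setOf_eq]
    constructor
    · rintro ⟨i, hi, rfl⟩
      refine ⟨⟨(i : ℕ) - s1, by omega⟩, ?_⟩
      have : R.symm (Sum.inr ⟨(i : ℕ) - s1, by omega⟩) = i := by
        rw [← hRval2 i hi, Equiv.symm_apply_apply]
      rw [this]
    · rintro ⟨b, rfl⟩
      refine ⟨R.symm (Sum.inr b), ?_, rfl⟩
      rw [hRsymm_val2 b]
      omega
  -- file2 swapped equivs
  set R2 : Fin k ≃ (Fin s2 ⊕ Fin s1) := R.trans (Equiv.sumComm _ _) with hR2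
  set Ec2 : Fin n ≃ (Fin n2 ⊕ Fin n1) := Ec.trans (Equiv.sumComm _ _) with hEc2
  have hGfun2 : ∀ i j, G i j = Matrix.fromBlocks G2 0 0 G1 (R2 i) (Ec2 j) := by
    intro i j
    rw [hGfun i j]
    show Matrix.fromBlocks G1 0 0 G2 (R i) (Ec j)
      = Matrix.fromBlocks G2 0 0 G1 (Equiv.sumComm _ _ (R i)) (Equiv.sumComm _ _ (Ec j))
    rcases R i with a | a <;> rcases Ec j with b | b <;> rfl
  have hR2symm : ∀ b : Fin s2, R2.symm (Sum.inl b) = R.symm (Sum.inr b) := by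
    intro b
    rfl
  -- apply master
  have hm1 := master F hs1 hn1 hn R Ec G1 G2 hG1 G hGfun
  have hm2 := master F hs2 hn2 (by omega : n = n2 + n1) R2 Ec2 G2 G1 hG2 G hGfun2
  rw [← hfile1] at hm1
  have hfile2' : file2 F k s1 = Submodule.span F
      {v : Fin k → F | ∃ b : Fin s2, v = Pi.single (R2.symm (Sum.inl b)) 1} := by
    rw [hfile2]
    congr 1
  rw [← hfile2'] at hm2
  refine ⟨⟨?_, ?_⟩, ?_, ?_⟩
  · rw [hm1, harm_sum_Icc n1 s1 hn1]
  · rw [hm1, harm_diff n1 s1 hn1]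
  · rw [hm2, harm_sum_Icc n2 s2 hn2]
  · rw [hm2, harm_diff n2 s2 hn2]
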